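/- Let κ > 0 and r̄ ∈ ℝⁿ, and for each ε > 0 let x_RMV(ε) be the unique minimizer over C of the function x ↦ κ xᵀΣx + √ε·√(xᵀΣx) − r̄ᵀx. Then x_RMV(ε) → x_MV as ε → 0⁺ and x_RMV(ε) → x_MIN as ε → +∞ (convergence in the Euclidean norm on ℝⁿ). -/

import Mathlib

open Matrix Filter

lemma stmt19_sym {n : ℕ} {A : Matrix (Fin n) (Fin n) ℝ} (hAs : Aᵀ = A) (u v : Fin n → ℝ) :
    u ⬝ᵥ A *ᵥ v = v ⬝ᵥ A *ᵥ u := by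
  rw [Matrix.dotProduct_mulVec, ← Matrix.mulVec_transpose, hAs, dotProduct_comm]

lemma stmt19_expand {n : ℕ} {A : Matrix (Fin n) (Fin n) ℝ} (hAs : Aᵀ = A) (x y : Fin n → ℝ) :
    x ⬝ᵥ A *ᵥ x = y ⬝ᵥ A *ᵥ y + (x - y) ⬝ᵥ A *ᵥ (x - y) + 2 * (y ⬝ᵥ A *ᵥ (x - y)) := by
  simp only [Matrix.mulVec_sub, dotProduct_sub, sub_dotProduct]
  rw [stmt19_sym hAs y x]
  ring

lemma stmt19_key {n : ℕ} {A : Matrix (Fin n) (Fin n) ℝ} (hAs : Aᵀ = A)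
    (κ c : ℝ) (e y r : Fin n → ℝ) (h : (2*κ) • (A *ᵥ y) - r = c • e)
    (x : Fin n → ℝ) (hx : e ⬝ᵥ x = e ⬝ᵥ y) :
    κ*(x ⬝ᵥ A *ᵥ x) - r ⬝ᵥ x = κ*(y ⬝ᵥ A *ᵥ y) - r ⬝ᵥ y + κ*((x-y) ⬝ᵥ A *ᵥ (x-y)) := by
  have h0 : ((2*κ) • (A *ᵥ y) - r) ⬝ᵥ (x - y) = c * (e ⬝ᵥ (x - y)) := by
    rw [h, smul_dotProduct]; simp
  have he0 : e ⬝ᵥ (x - y) = 0 := by rw [dotProduct_sub, hx, sub_self]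
  rw [he0, mul_zero, sub_dotProduct, smul_dotProduct] at h0
  have hc : (A *ᵥ y) ⬝ᵥ (x - y) = y ⬝ᵥ A *ᵥ (x - y) := by
    rw [dotProduct_comm, stmt19_sym hAs]
  rw [hc] at h0
  have hexp := stmt19_expand hAs x y
  have hr : r ⬝ᵥ x = r ⬝ᵥ y + r ⬝ᵥ (x - y) := by
    rw [dotProduct_sub]; ring
  rw [hexp, hr]
  have : (2*κ) * (y ⬝ᵥ A *ᵥ (x-y)) = r ⬝ᵥ (x - y) := by
    have := h0; simp at this; linarith [this]
  linarith

lemma stmt19_coercive {n : ℕ} (hn : 1 ≤ n) (A : Matrix (Fin n) (Fin n) ℝ) (hA : A.PosDef) :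
    ∃ m > 0, ∀ x : Fin n → ℝ, m * ‖x‖^2 ≤ x ⬝ᵥ A *ᵥ x := by
  have hq : Continuous fun x : Fin n → ℝ => x ⬝ᵥ A *ᵥ x := by
    simp only [dotProduct, Matrix.mulVec, dotProduct]
    fun_prop
  have hpos : ∀ x : Fin n → ℝ, x ≠ 0 → 0 < x ⬝ᵥ A *ᵥ x := by
    intro x hx
    have := hA.dotProduct_mulVec_pos hx
    simpa using this
  haveI : Nontrivial (Fin n → ℝ) := ⟨⟨0, fun _ => 1, by intro h; simpa using congrFun h ⟨0, hn⟩⟩⟩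
  have hne : (Metric.sphere (0 : Fin n → ℝ) 1).Nonempty := by
    exact NormedSpace.sphere_nonempty.mpr (by norm_num)
  obtain ⟨z, hz, hmin⟩ := (isCompact_sphere (0 : Fin n → ℝ) 1).exists_isMinOn hne hq.continuousOn
  have hz1 : ‖z‖ = 1 := by simpa using hz
  have hz0 : z ≠ 0 := by intro h; rw [h] at hz1; simp at hz1
  refine ⟨z ⬝ᵥ A *ᵥ z, hpos z hz0, ?_⟩
  intro x
  rcases eq_or_ne x 0 with rfl | hx
  · simp
  · have hnx : (0:ℝ) < ‖x‖ := norm_pos_iff.mpr hx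
    set y := ‖x‖⁻¹ • x with hy
    have hyS : y ∈ Metric.sphere (0 : Fin n → ℝ) 1 := by
      simp [hy, norm_smul, abs_of_pos (inv_pos.mpr hnx), inv_mul_cancel₀ hnx.ne']
    have h1 : z ⬝ᵥ A *ᵥ z ≤ y ⬝ᵥ A *ᵥ y := hmin hyS
    have h2 : y ⬝ᵥ A *ᵥ y = ‖x‖⁻¹^2 * (x ⬝ᵥ A *ᵥ x) := by
      simp [hy, Matrix.mulVec_smul, smul_dotProduct, dotProduct_smul]; ring
    rw [h2] at h1
    have := mul_le_mul_of_nonneg_right h1 (le_of_lt (by positivity : (0:ℝ) < ‖x‖^2))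
    calc (z ⬝ᵥ A *ᵥ z) * ‖x‖^2 ≤ ‖x‖⁻¹^2 * (x ⬝ᵥ A *ᵥ x) * ‖x‖^2 := this
      _ = x ⬝ᵥ A *ᵥ x := by field_simp

set_option maxHeartbeats 1000000 in
/-- letting `x_RMV(ε)` be the unique minimizer over `C` of
`x ↦ κ xᵀΣx + √ε √(xᵀΣx) − r̄ᵀx`, one has `x_RMV(ε) → x_MV` as `ε → 0⁺` and
`x_RMV(ε) → x_MIN` as `ε → +∞`. -/
theorem stmt19 (n : ℕ) (hn : 1 ≤ n) (A : Matrix (Fin n) (Fin n) ℝ)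
    (hA : A.PosDef) (hAs : A.IsSymm)
    (e : Fin n → ℝ) (he : e = fun _ => 1)
    (β : ℝ) (hβ : β = e ⬝ᵥ A⁻¹ *ᵥ e)
    (xMIN : Fin n → ℝ) (hxMIN : xMIN = β⁻¹ • (A⁻¹ *ᵥ e))
    (κ : ℝ) (hκ : 0 < κ) (rbar : Fin n → ℝ)
    (xMV : Fin n → ℝ)
    (hxMV : xMV = (1 / (2 * κ)) •
        ((A⁻¹ - β⁻¹ • vecMulVec (A⁻¹ *ᵥ e) (e ᵥ* A⁻¹)) *ᵥ rbar) + xMIN)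
    (xRMV : ℝ → (Fin n → ℝ))
    (hxRMV : ∀ ε : ℝ, 0 < ε →
      e ⬝ᵥ xRMV ε = 1 ∧
      ∀ y : Fin n → ℝ, e ⬝ᵥ y = 1 → y ≠ xRMV ε →
        κ * (xRMV ε ⬝ᵥ A *ᵥ xRMV ε)
            + Real.sqrt ε * Real.sqrt (xRMV ε ⬝ᵥ A *ᵥ xRMV ε) - rbar ⬝ᵥ xRMV ε <
          κ * (y ⬝ᵥ A *ᵥ y) + Real.sqrt ε * Real.sqrt (y ⬝ᵥ A *ᵥ y) - rbar ⬝ᵥ y) :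
    Tendsto xRMV (nhdsWithin 0 (Set.Ioi 0)) (nhds xMV) ∧
    Tendsto xRMV atTop (nhds xMIN) := by
  obtain ⟨m, hm, hcoer⟩ := stmt19_coercive hn A hA
  -- algebraic facts
  have hdet : IsUnit A.det := isUnit_iff_ne_zero.mpr hA.det_pos.ne'
  have hAAinv : ∀ v : Fin n → ℝ, A *ᵥ (A⁻¹ *ᵥ v) = v := by
    intro v; rw [Matrix.mulVec_mulVec, Matrix.mul_nonsing_inv A hdet, Matrix.one_mulVec]
  have hAinvs : A⁻¹ᵀ = A⁻¹ := by
    rw [Matrix.transpose_nonsing_inv, hAs.eq]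
  set w : Fin n → ℝ := A⁻¹ *ᵥ e with hw
  have hvw : e ᵥ* A⁻¹ = w := by rw [← hAinvs, Matrix.vecMul_transpose]
  have he0 : e ≠ 0 := by
    rw [he]; intro h; simpa using congrFun h ⟨0, hn⟩
  have hβpos : 0 < β := by
    have := (hA.inv).dotProduct_mulVec_pos he0
    rw [hβ]; simpa using this
  have hew : e ⬝ᵥ w = β := by rw [hβ, hw]
  have hAw : A *ᵥ w = e := hAAinv e
  have hexMIN : e ⬝ᵥ xMIN = 1 := by
    rw [hxMIN, dotProduct_smul, hew]
    simp [inv_mul_cancel₀ hβpos.ne']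
  have hAxMIN : A *ᵥ xMIN = β⁻¹ • e := by
    rw [hxMIN, Matrix.mulVec_smul, hAw]
  have hvmv : ∀ v : Fin n → ℝ, vecMulVec w w *ᵥ v = (w ⬝ᵥ v) • w := by
    intro v; ext i
    simp [Matrix.vecMulVec_apply, Matrix.mulVec, dotProduct, Finset.mul_sum, Finset.sum_mul]
    congr 1; ext j; ring
  have hwr : e ⬝ᵥ (A⁻¹ *ᵥ rbar) = w ⬝ᵥ rbar := by
    rw [hw, Matrix.dotProduct_mulVec, hvw]
  have hAxMV : A *ᵥ xMV = (1 / (2 * κ)) • (rbar - (β⁻¹ * (w ⬝ᵥ rbar)) • e) + β⁻¹ • e := by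
    rw [hxMV, Matrix.mulVec_add, Matrix.mulVec_smul, hAxMIN, Matrix.sub_mulVec,
      Matrix.smul_mulVec, hvw, hvmv, Matrix.mulVec_sub, Matrix.mulVec_smul,
      Matrix.mulVec_smul, hAAinv, hAw, smul_smul]
  have hexMV : e ⬝ᵥ xMV = 1 := by
    rw [hxMV, dotProduct_add, dotProduct_smul, Matrix.sub_mulVec,
      Matrix.smul_mulVec, hvw, hvmv, dotProduct_sub, dotProduct_smul,
      dotProduct_smul, hwr, hew, hexMIN]
    simp [smul_eq_mul]
    ring_nf
    right
    field_simp
    simp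
  have hcMV : (2*κ) • (A *ᵥ xMV) - rbar = (β⁻¹ * (2*κ) - β⁻¹ * (w ⬝ᵥ rbar)) • e := by
    rw [hAxMV]
    ext i
    simp [smul_eq_mul]
    field_simp
    ring
  have hcMIN : (2*(1:ℝ)) • (A *ᵥ xMIN) - 0 = (2 * β⁻¹) • e := by
    rw [hAxMIN]
    ext i; simp [smul_eq_mul]; ring
  -- key identities
  have key1 : ∀ x : Fin n → ℝ, e ⬝ᵥ x = 1 →
      κ*(x ⬝ᵥ A *ᵥ x) - rbar ⬝ᵥ x = κ*(xMV ⬝ᵥ A *ᵥ xMV) - rbar ⬝ᵥ xMV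
        + κ*((x-xMV) ⬝ᵥ A *ᵥ (x-xMV)) := by
    intro x hx
    exact stmt19_key hAs.eq κ _ e xMV rbar hcMV x (by rw [hx, hexMV])
  have key2 : ∀ x : Fin n → ℝ, e ⬝ᵥ x = 1 →
      x ⬝ᵥ A *ᵥ x = xMIN ⬝ᵥ A *ᵥ xMIN + (x-xMIN) ⬝ᵥ A *ᵥ (x-xMIN) := by
    intro x hx
    have := stmt19_key hAs.eq 1 (2*β⁻¹) e xMIN 0 hcMIN x (by rw [hx, hexMIN])
    simpa using this
  have qnn : ∀ v : Fin n → ℝ, 0 ≤ v ⬝ᵥ A *ᵥ v := by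
    intro v
    exact le_trans (mul_nonneg hm.le (by positivity)) (hcoer v)
  -- convenient abbreviations
  set hMV : ℝ := Real.sqrt (xMV ⬝ᵥ A *ᵥ xMV) with hhMV
  set h0 : ℝ := Real.sqrt (xMIN ⬝ᵥ A *ᵥ xMIN) with hh0
  have hMVnn : 0 ≤ hMV := Real.sqrt_nonneg _
  have h0nn : 0 ≤ h0 := Real.sqrt_nonneg _
  set D : ℝ := (κ*(xMIN ⬝ᵥ A *ᵥ xMIN) - rbar ⬝ᵥ xMIN)
    - (κ*(xMV ⬝ᵥ A *ᵥ xMV) - rbar ⬝ᵥ xMV) with hD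
  have hDnn : 0 ≤ D := by
    have hk := key1 xMIN hexMIN
    have := qnn (xMIN - xMV)
    have : 0 ≤ κ * ((xMIN-xMV) ⬝ᵥ A *ᵥ (xMIN-xMV)) := mul_nonneg hκ.le this
    rw [hD]; linarith
  constructor
  · -- ε → 0⁺
    have bound1 : ∀ ε : ℝ, 0 < ε → ‖xRMV ε - xMV‖ ≤
        Real.sqrt (Real.sqrt ε * (hMV / (κ * m))) := by
      intro ε hε
      obtain ⟨hx1, hmin⟩ := hxRMV ε hε
      set x := xRMV ε with hxdef
      have hle : κ * (x ⬝ᵥ A *ᵥ x) + Real.sqrt ε * Real.sqrt (x ⬝ᵥ A *ᵥ x) - rbar ⬝ᵥ x ≤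
          κ * (xMV ⬝ᵥ A *ᵥ xMV) + Real.sqrt ε * hMV - rbar ⬝ᵥ xMV := by
        rcases eq_or_ne xMV x with h | h
        · rw [hhMV, h]
        · exact le_of_lt (hmin xMV hexMV h)
      have hk := key1 x hx1
      have hqx : 0 ≤ Real.sqrt ε * Real.sqrt (x ⬝ᵥ A *ᵥ x) :=
        mul_nonneg (Real.sqrt_nonneg _) (Real.sqrt_nonneg _)
      have hd : κ * ((x - xMV) ⬝ᵥ A *ᵥ (x - xMV)) ≤ Real.sqrt ε * hMV := by linarith
      have hd2 : κ * (m * ‖x - xMV‖^2) ≤ Real.sqrt ε * hMV := by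
        have := hcoer (x - xMV)
        nlinarith
      have hkm : (0:ℝ) < κ * m := mul_pos hκ hm
      have h3 : ‖x - xMV‖^2 ≤ Real.sqrt ε * (hMV / (κ * m)) := by
        rw [mul_div_assoc']
        rw [le_div_iff₀ hkm]
        nlinarith
      calc ‖x - xMV‖ = Real.sqrt (‖x - xMV‖^2) := (Real.sqrt_sq (norm_nonneg _)).symm
        _ ≤ _ := Real.sqrt_le_sqrt h3
    rw [tendsto_iff_norm_sub_tendsto_zero]
    apply squeeze_zero' (f := fun ε => ‖xRMV ε - xMV‖)
      (g := fun ε => Real.sqrt (Real.sqrt ε * (hMV / (κ * m))))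
    · exact Eventually.of_forall fun _ => norm_nonneg _
    · filter_upwards [self_mem_nhdsWithin] with ε hε
      exact bound1 ε hε
    · have hcont : Continuous fun ε : ℝ => Real.sqrt (Real.sqrt ε * (hMV / (κ * m))) :=
        Real.continuous_sqrt.comp (Real.continuous_sqrt.mul continuous_const)
      have := hcont.tendsto 0
      simp only [Real.sqrt_zero, zero_mul] at this
      exact this.mono_left nhdsWithin_le_nhds
  · -- ε → ∞
    have bound2 : ∀ ε : ℝ, 0 < ε → ‖xRMV ε - xMIN‖ ≤
        Real.sqrt ((D / Real.sqrt ε * (D / Real.sqrt ε + 2 * h0)) / m) := by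
      intro ε hε
      obtain ⟨hx1, hmin⟩ := hxRMV ε hε
      set x := xRMV ε with hxdef
      set s : ℝ := Real.sqrt ε with hs
      have hspos : 0 < s := Real.sqrt_pos.mpr hε
      have hle : κ * (x ⬝ᵥ A *ᵥ x) + s * Real.sqrt (x ⬝ᵥ A *ᵥ x) - rbar ⬝ᵥ x ≤
          κ * (xMIN ⬝ᵥ A *ᵥ xMIN) + s * h0 - rbar ⬝ᵥ xMIN := by
        rcases eq_or_ne xMIN x with h | h
        · rw [hh0, h]
        · exact le_of_lt (hmin xMIN hexMIN h)
      have hk1 := key1 x hx1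
      have hd1 : 0 ≤ κ * ((x - xMV) ⬝ᵥ A *ᵥ (x - xMV)) := mul_nonneg hκ.le (qnn _)
      have hsu : s * (Real.sqrt (x ⬝ᵥ A *ᵥ x) - h0) ≤ D := by
        rw [mul_sub]; linarith [hle, hk1, hd1, hD.le, hD.ge]
      have hk2 := key2 x hx1
      have hqle : xMIN ⬝ᵥ A *ᵥ xMIN ≤ x ⬝ᵥ A *ᵥ x := by
        have := qnn (x - xMIN); linarith
      have hule : Real.sqrt (x ⬝ᵥ A *ᵥ x) - h0 ≤ D / s := by
        rw [le_div_iff₀ hspos]; linarith [hsu]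
      have hunn : 0 ≤ Real.sqrt (x ⬝ᵥ A *ᵥ x) - h0 := by
        rw [hh0]; linarith [Real.sqrt_le_sqrt hqle]
      have hsq1 : Real.sqrt (x ⬝ᵥ A *ᵥ x) ^ 2 = x ⬝ᵥ A *ᵥ x := Real.sq_sqrt (qnn _)
      have hsq2 : h0 ^ 2 = xMIN ⬝ᵥ A *ᵥ xMIN := Real.sq_sqrt (qnn _)
      have hdsnn : 0 ≤ D / s := div_nonneg hDnn hspos.le
      have hkey : m * ‖x - xMIN‖^2 ≤ D / s * (D / s + 2 * h0) := by
        have hc := hcoer (x - xMIN)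
        have hprod : (Real.sqrt (x ⬝ᵥ A *ᵥ x) - h0) * (Real.sqrt (x ⬝ᵥ A *ᵥ x) + h0) ≤
            D / s * (D / s + 2 * h0) := by
          apply mul_le_mul hule (by linarith) (by linarith [Real.sqrt_nonneg (x ⬝ᵥ A *ᵥ x)]) hdsnn
        have hid : (Real.sqrt (x ⬝ᵥ A *ᵥ x) - h0) * (Real.sqrt (x ⬝ᵥ A *ᵥ x) + h0)
            = x ⬝ᵥ A *ᵥ x - xMIN ⬝ᵥ A *ᵥ xMIN := by
          have : ∀ a b : ℝ, (a - b) * (a + b) = a^2 - b^2 := fun a b => by ring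
          rw [this, hsq1, hsq2]
        linarith [hc, hk2, hprod, hid.le, hid.ge]
      have h3 : ‖x - xMIN‖^2 ≤ (D / s * (D / s + 2 * h0)) / m := by
        rw [le_div_iff₀ hm]; linarith [hkey]
      calc ‖x - xMIN‖ = Real.sqrt (‖x - xMIN‖^2) := (Real.sqrt_sq (norm_nonneg _)).symm
        _ ≤ _ := Real.sqrt_le_sqrt h3
    rw [tendsto_iff_norm_sub_tendsto_zero]
    apply squeeze_zero' (f := fun ε => ‖xRMV ε - xMIN‖)
      (g := fun ε => Real.sqrt ((D / Real.sqrt ε * (D / Real.sqrt ε + 2 * h0)) / m))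
    · exact Eventually.of_forall fun _ => norm_nonneg _
    · filter_upwards [eventually_gt_atTop (0:ℝ)] with ε hε
      exact bound2 ε hε
    · have hsqrtTop : Tendsto Real.sqrt atTop atTop := by
        apply tendsto_atTop_atTop.mpr
        intro b
        refine ⟨b^2, fun a ha => ?_⟩
        calc b ≤ |b| := le_abs_self b
          _ = Real.sqrt (b^2) := (Real.sqrt_sq_eq_abs b).symm
          _ ≤ Real.sqrt a := Real.sqrt_le_sqrt ha
      have h1 : Tendsto (fun ε : ℝ => D / Real.sqrt ε) atTop (nhds 0) :=
        tendsto_const_nhds.div_atTop hsqrtTop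
      have hF : Continuous fun t : ℝ => Real.sqrt ((t * (t + 2 * h0)) / m) :=
        Real.continuous_sqrt.comp ((continuous_id.mul (continuous_id.add continuous_const)).div_const m)
      have := (hF.tendsto 0).comp h1
      simp only [Function.comp, zero_mul, zero_div, Real.sqrt_zero] at this
      exact this
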